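/- Let U be an open subset of E and let b : U → ℝ be twice continuously differentiable. Then for every x ∈ U, ⟨∇(‖∇b‖²)(x), ∇(b²)(x)⟩ = 2 · D²(b²)(x)(∇b(x), ∇b(x)) − 4‖∇b(x)‖⁴. (This is the paper's Lemma 2.2 in the Euclidean setting.) -/

import Mathlib

open Real Set
open scoped RealInnerProductSpace
open InnerProductSpace

theorem stmt_3 {n : ℕ} (hn : 3 ≤ n)
    (U : Set (EuclideanSpace ℝ (Fin n))) (hU : IsOpen U)
    (b : EuclideanSpace ℝ (Fin n) → ℝ)
    (hb : ContDiffOn ℝ 2 b U) :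
    ∀ x ∈ U,
      ⟪gradient (fun y => ‖gradient b y‖ ^ 2) x, gradient (fun y => b y ^ 2) x⟫
        = 2 * iteratedFDeriv ℝ 2 (fun y => b y ^ 2) x ![gradient b x, gradient b x]
          - 4 * ‖gradient b x‖ ^ 4 := by
  intro x hx
  have hmem : U ∈ nhds x := hU.mem_nhds hx
  have hdb : ∀ y ∈ U, DifferentiableAt ℝ b y := fun y hy =>
    (hb.contDiffAt (hU.mem_nhds hy)).differentiableAt two_ne_zero
  have hdbx : DifferentiableAt ℝ b x := hdb x hx
  have hfd : DifferentiableAt ℝ (fderiv ℝ b) x :=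
    ((hb.contDiffAt hmem).fderiv_right (le_refl 2)).differentiableAt one_ne_zero
  set v := gradient b x with hv
  set B := fderiv ℝ (fderiv ℝ b) x with hB
  have hvd : (toDual ℝ (EuclideanSpace ℝ (Fin n))) v = fderiv ℝ b x := (toDual ℝ (EuclideanSpace ℝ (Fin n))).apply_symm_apply _
  have hval : ∀ w, fderiv ℝ b x w = ⟪v, w⟫ := by
    intro w; rw [← hvd, toDual_apply_apply]
  -- derivative of b ^ 2
  have hsq : ∀ y ∈ U, HasFDerivAt (fun y => b y ^ 2) ((2 * b y) • fderiv ℝ b y) y := by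
    intro y hy
    have h : HasFDerivAt (fun y => b y * b y) _ y := ((hdb y hy).hasFDerivAt).mul ((hdb y hy).hasFDerivAt)
    have : (fun y => b y * b y) = fun y => b y ^ 2 := by funext z; ring
    rw [this] at h
    rw [two_mul, add_smul]
    exact h
  have hgradsq : gradient (fun y => b y ^ 2) x = (2 * b x) • v := by
    rw [gradient, (hsq x hx).fderiv, ← hvd, ← map_smul]
    exact (toDual ℝ (EuclideanSpace ℝ (Fin n))).symm_apply_apply _
  -- derivative of gradient b
  obtain ⟨L, hLval⟩ : ∃ L : (EuclideanSpace ℝ (Fin n) →L[ℝ] ℝ) →L[ℝ] EuclideanSpace ℝ (Fin n),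
      ∀ (ℓ : EuclideanSpace ℝ (Fin n) →L[ℝ] ℝ) (w : EuclideanSpace ℝ (Fin n)), ⟪L ℓ, w⟫ = ℓ w ∧
        L ℓ = (toDual ℝ (EuclideanSpace ℝ (Fin n))).symm ℓ := by
    refine ⟨(toDual ℝ (EuclideanSpace ℝ (Fin n))).symm.toContinuousLinearEquiv.toContinuousLinearMap, fun ℓ w => ⟨?_, rfl⟩⟩
    exact toDual_symm_apply
  have hgeq : gradient b = fun y => L (fderiv ℝ b y) := by
    funext y; rw [(hLval _ y).2]; rfl
  have hg' : HasFDerivAt (gradient b) (L.comp B) x := by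
    rw [hgeq]
    exact L.hasFDerivAt.comp x hfd.hasFDerivAt
  -- derivative of ‖gradient b‖ ^ 2
  have hnorm : HasFDerivAt (fun y => ‖gradient b y‖ ^ 2)
      ((fderivInnerCLM ℝ (v, v)).comp ((L.comp B).prod (L.comp B))) x := by
    have h := hg'.inner (𝕜 := ℝ) hg'
    have : (fun y => (⟪gradient b y, gradient b y⟫ : ℝ)) = fun y => ‖gradient b y‖ ^ 2 := by
      funext z; rw [real_inner_self_eq_norm_sq]
    rwa [this] at h
  -- the LHS
  have hLHS : ⟪gradient (fun y => ‖gradient b y‖ ^ 2) x, gradient (fun y => b y ^ 2) x⟫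
      = 4 * b x * B v v := by
    rw [gradient, hnorm.fderiv, toDual_symm_apply, hgradsq]
    simp only [ContinuousLinearMap.comp_apply, ContinuousLinearMap.prod_apply,
      fderivInnerCLM_apply, map_smul]
    rw [(hLval _ _).1, real_inner_comm, (hLval _ _).1]
    simp only [smul_eq_mul]
    ring
  -- the RHS second derivative
  have hev : (fderiv ℝ (fun y => b y ^ 2)) =ᶠ[nhds x] fun y => (2 * b y) • fderiv ℝ b y := by
    filter_upwards [hmem] with y hy
    exact (hsq y hy).fderiv
  have hc : HasFDerivAt (fun y => 2 * b y) ((2 : ℝ) • fderiv ℝ b x) x :=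
    hdbx.hasFDerivAt.const_mul 2
  have hφ : HasFDerivAt (fun y => (2 * b y) • fderiv ℝ b y)
      ((2 * b x) • B + ((2 : ℝ) • fderiv ℝ b x).smulRight (fderiv ℝ b x)) x :=
    hc.smul hfd.hasFDerivAt
  have h2 : fderiv ℝ (fderiv ℝ (fun y => b y ^ 2)) x
      = (2 * b x) • B + ((2 : ℝ) • fderiv ℝ b x).smulRight (fderiv ℝ b x) := by
    rw [hev.fderiv_eq]; exact hφ.fderiv
  have hRHS : iteratedFDeriv ℝ 2 (fun y => b y ^ 2) x ![v, v]
      = 2 * b x * B v v + 2 * ‖v‖ ^ 2 * ‖v‖ ^ 2 := by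
    rw [iteratedFDeriv_two_apply, h2]
    simp only [Matrix.cons_val_zero, Matrix.cons_val_one, Matrix.head_cons,
      ContinuousLinearMap.add_apply, ContinuousLinearMap.smul_apply,
      ContinuousLinearMap.smulRight_apply, smul_eq_mul]
    rw [hval, real_inner_self_eq_norm_sq]
  rw [hLHS, hRHS]
  ring
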